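/- For every positive integer t, the number of elements α ∈ ℤ[i] with N(α) = t, counted up to multiplication by units, is at most τ(t), the number of positive divisors of t. -/

import Mathlib

namespace Stmt7Aux

/-- `a + b i` is a primitive element of norm `m`. -/
def Prim (m : ℕ) (a b : ℤ) : Prop := a ^ 2 + b ^ 2 = (m : ℤ) ∧ Int.gcd a b = 1

open Classical in
noncomputable def refP (m : ℕ) : ℤ × ℤ :=
  if h : ∃ p : ℤ × ℤ, Prim m p.1 p.2 then h.choose else (0, 0)

lemma refP_spec {m : ℕ} (h : ∃ p : ℤ × ℤ, Prim m p.1 p.2) :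
    Prim m (refP m).1 (refP m).2 := by
  classical
  rw [refP]
  rw [dif_pos h]
  exact h.choose_spec

lemma Prim.m_ne_zero {m : ℕ} {a b : ℤ} (h : Prim m a b) : m ≠ 0 := by
  rintro rfl
  have h1 := h.1
  push_cast at h1
  have ha : a = 0 := by nlinarith [sq_nonneg a, sq_nonneg b]
  have hb : b = 0 := by nlinarith [sq_nonneg a, sq_nonneg b]
  have := h.2
  simp [ha, hb] at this

lemma Prim.coprime_left {m : ℕ} {a b : ℤ} (h : Prim m a b) : IsCoprime a (m : ℤ) := by
  have hab : IsCoprime a b := Int.isCoprime_iff_gcd_eq_one.mpr h.2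
  have h2 : IsCoprime a (b ^ 2 + a * a) := (hab.pow_right).add_mul_left_right a
  have : (m : ℤ) = b ^ 2 + a * a := by linear_combination -h.1
  rwa [this]

lemma Prim.coprime_right {m : ℕ} {a b : ℤ} (h : Prim m a b) : IsCoprime b (m : ℤ) := by
  have : Prim m b a := ⟨by linarith [h.1], by rw [Int.gcd_comm]; exact h.2⟩
  exact this.coprime_left

lemma Prim.two_le_one {m : ℕ} {a b : ℤ} (h : Prim m a b) : m.factorization 2 ≤ 1 := by
  by_contra hc
  push_neg at hc
  have h4 : (2 : ℕ) ^ 2 ∣ m := by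
    calc (2:ℕ)^2 ∣ 2 ^ (m.factorization 2) := pow_dvd_pow 2 hc
    _ ∣ m := Nat.ordProj_dvd m 2
  have h4' : (4 : ℤ) ∣ (m : ℤ) := by
    have := Int.natCast_dvd_natCast.mpr h4
    norm_num at this ⊢
    exact_mod_cast this
  obtain ⟨c, hc4⟩ := h4'
  rw [← h.1] at hc4
  have hg := h.2
  rcases Int.even_or_odd a with ⟨j, hj⟩ | ⟨j, hj⟩ <;>
    rcases Int.even_or_odd b with ⟨k, hk⟩ | ⟨k, hk⟩
  · -- both even : contradicts gcd = 1
    have h2a : (2 : ℤ) ∣ a := ⟨j, by omega⟩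
    have h2b : (2 : ℤ) ∣ b := ⟨k, by omega⟩
    have := Int.dvd_gcd h2a h2b
    rw [hg] at this
    norm_num at this
  · have e1 : a ^ 2 = 4 * (j * j) := by subst hj; ring
    have e2 : b ^ 2 = 4 * (k * k) + 4 * k + 1 := by subst hk; ring
    rw [e1, e2] at hc4
    omega
  · have e1 : a ^ 2 = 4 * (j * j) + 4 * j + 1 := by subst hj; ring
    have e2 : b ^ 2 = 4 * (k * k) := by subst hk; ring
    rw [e1, e2] at hc4
    omega
  · have e1 : a ^ 2 = 4 * (j * j) + 4 * j + 1 := by subst hj; ring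
    have e2 : b ^ 2 = 4 * (k * k) + 4 * k + 1 := by subst hk; ring
    rw [e1, e2] at hc4
    omega

lemma Prim.odd_of_even {m : ℕ} {a b : ℤ} (h : Prim m a b) (hm : 2 ∣ m) :
    Odd a ∧ Odd b := by
  have h2 : (2 : ℤ) ∣ a ^ 2 + b ^ 2 := by
    rw [h.1]; exact_mod_cast Int.natCast_dvd_natCast.mpr hm
  rcases Int.even_or_odd a with ⟨j, hj⟩ | ha
  · -- a even forces b even, contradiction
    rcases Int.even_or_odd b with ⟨k, hk⟩ | ⟨k, hk⟩
    · exfalso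
      have h2a : (2 : ℤ) ∣ a := ⟨j, by omega⟩
      have h2b : (2 : ℤ) ∣ b := ⟨k, by omega⟩
      have := Int.dvd_gcd h2a h2b
      rw [h.2] at this
      norm_num at this
    · exfalso
      have e1 : a ^ 2 = 4 * (j * j) := by subst hj; ring
      have e2 : b ^ 2 = 4 * (k * k) + 4 * k + 1 := by subst hk; ring
      obtain ⟨c, hc⟩ := h2
      rw [e1, e2] at hc
      omega
  · rcases Int.even_or_odd b with ⟨k, hk⟩ | hb
    · exfalso
      obtain ⟨j, hj⟩ := ha
      have e1 : a ^ 2 = 4 * (j * j) + 4 * j + 1 := by subst hj; ring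
      have e2 : b ^ 2 = 4 * (k * k) := by subst hk; ring
      obtain ⟨c, hc⟩ := h2
      rw [e1, e2] at hc
      omega
    · exact ⟨ha, hb⟩

end Stmt7Aux

namespace Stmt7Aux

/-- Key: for odd primes `p ∣ m` dividing `M = a b₀ - b a₀`, the full `p`-block of `m`
divides `M`. -/
lemma block {m : ℕ} {a b a₀ b₀ : ℤ} (hm : Prim m a b) (h0 : Prim m a₀ b₀)
    {p : ℕ} (hp : p.Prime) (hp2 : p ≠ 2) (hpm : p ∣ m)
    (hpM : (p : ℤ) ∣ a * b₀ - b * a₀) :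
    (p : ℤ) ^ (m.factorization p) ∣ a * b₀ - b * a₀ := by
  have hpZ : Prime (p : ℤ) := Int.prime_iff_natAbs_prime.mpr (by simpa using hp)
  have hpmZ : (p : ℤ) ∣ (m : ℤ) := Int.natCast_dvd_natCast.mpr hpm
  have key : (a * b₀ - b * a₀) * (a * b₀ + b * a₀) = (m : ℤ) * (b₀ ^ 2 - b ^ 2) := by
    linear_combination b₀ ^ 2 * hm.1 - b ^ 2 * h0.1
  have hpN : ¬ (p : ℤ) ∣ (a * b₀ + b * a₀) := by
    intro hN
    have h2ab : (p : ℤ) ∣ 2 * (a * b₀) := by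
      have := dvd_add hpM hN
      have e : a * b₀ - b * a₀ + (a * b₀ + b * a₀) = 2 * (a * b₀) := by ring
      rwa [e] at this
    rcases hpZ.dvd_mul.mp h2ab with h2 | hab
    · have : (p : ℤ) ∣ 2 := h2
      have hp2' : p ∣ 2 := by exact_mod_cast Int.natCast_dvd_natCast.mp (by exact_mod_cast this)
      have := (Nat.prime_dvd_prime_iff_eq hp Nat.prime_two).mp hp2'
      exact hp2 this
    · rcases hpZ.dvd_mul.mp hab with ha | hb0
      · obtain ⟨u, v, huv⟩ := hm.coprime_left
        have : (p : ℤ) ∣ 1 := by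
          rw [← huv]
          exact dvd_add (Dvd.dvd.mul_left ha u) (Dvd.dvd.mul_left hpmZ v)
        exact hpZ.not_dvd_one this
      · obtain ⟨u, v, huv⟩ := h0.coprime_right
        have : (p : ℤ) ∣ 1 := by
          rw [← huv]
          exact dvd_add (Dvd.dvd.mul_left hb0 u) (Dvd.dvd.mul_left hpmZ v)
        exact hpZ.not_dvd_one this
  have hpem : (p : ℤ) ^ (m.factorization p) ∣ (m : ℤ) := by
    exact_mod_cast Int.natCast_dvd_natCast.mpr (Nat.ordProj_dvd m p)
  have hMN : (p : ℤ) ^ (m.factorization p) ∣ (a * b₀ - b * a₀) * (a * b₀ + b * a₀) := by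
    rw [key]; exact hpem.mul_right _
  have hcop : IsCoprime ((p : ℤ) ^ (m.factorization p)) (a * b₀ + b * a₀) :=
    ((hpZ.coprime_iff_not_dvd.mpr hpN)).pow_left
  exact hcop.dvd_of_dvd_mul_right hMN

/-- complementary: if `p ∣ m` but `p ∤ M` then the full block divides `N = a b₀ + b a₀`. -/
lemma block' {m : ℕ} {a b a₀ b₀ : ℤ} (hm : Prim m a b) (h0 : Prim m a₀ b₀)
    {p : ℕ} (hp : p.Prime) (hpm : p ∣ m)
    (hpM : ¬ (p : ℤ) ∣ a * b₀ - b * a₀) :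
    (p : ℤ) ^ (m.factorization p) ∣ a * b₀ + b * a₀ := by
  have hpZ : Prime (p : ℤ) := Int.prime_iff_natAbs_prime.mpr (by simpa using hp)
  have key : (a * b₀ - b * a₀) * (a * b₀ + b * a₀) = (m : ℤ) * (b₀ ^ 2 - b ^ 2) := by
    linear_combination b₀ ^ 2 * hm.1 - b ^ 2 * h0.1
  have hpem : (p : ℤ) ^ (m.factorization p) ∣ (m : ℤ) := by
    exact_mod_cast Int.natCast_dvd_natCast.mpr (Nat.ordProj_dvd m p)
  have hMN : (p : ℤ) ^ (m.factorization p) ∣ (a * b₀ - b * a₀) * (a * b₀ + b * a₀) := by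
    rw [key]; exact hpem.mul_right _
  have hcop : IsCoprime ((p : ℤ) ^ (m.factorization p)) (a * b₀ - b * a₀) :=
    ((hpZ.coprime_iff_not_dvd.mpr hpM)).pow_left
  exact hcop.dvd_of_dvd_mul_left hMN

/-- The gcd `d = gcd(m, M)` has, at each prime, valuation `0` or the full valuation of `m`. -/
lemma block_nat {m : ℕ} {a b a₀ b₀ : ℤ} (hm : Prim m a b) (h0 : Prim m a₀ b₀)
    (p : ℕ) (hp : p.Prime) :
    (Int.gcd (m : ℤ) (a * b₀ - b * a₀)).factorization p = 0 ∨
    (Int.gcd (m : ℤ) (a * b₀ - b * a₀)).factorization p = m.factorization p := by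
  set M : ℤ := a * b₀ - b * a₀ with hM
  set d : ℕ := Int.gcd (m : ℤ) M with hd
  have hm0 : m ≠ 0 := hm.m_ne_zero
  have hdm : d ∣ m := by
    have : (d : ℤ) ∣ (m : ℤ) := Int.gcd_dvd_left _ _
    exact_mod_cast this
  have hd0 : d ≠ 0 := by
    intro h
    rw [hd] at h
    have := Int.gcd_eq_zero_iff.mp h
    exact_mod_cast hm0 (by exact_mod_cast this.1)
  have hdlem : d.factorization p ≤ m.factorization p :=
    (Nat.factorization_le_iff_dvd hd0 hm0).mpr hdm p
  by_cases hpd : p ∣ d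
  · right
    by_cases hp2 : p = 2
    · subst hp2
      have h1 : 1 ≤ d.factorization 2 := (Nat.Prime.factorization_pos_of_dvd hp hd0 hpd)
      have h2 : m.factorization 2 ≤ 1 := hm.two_le_one
      omega
    · have hpm : p ∣ m := hpd.trans hdm
      have hpM : (p : ℤ) ∣ M := by
        have h1 : (d : ℤ) ∣ M := Int.gcd_dvd_right _ _
        exact (Int.natCast_dvd_natCast.mpr hpd).trans h1
      have hblk := block hm h0 hp hp2 hpm hpM
      have hpe : (p : ℕ) ^ (m.factorization p) ∣ d := by
        have h2 : ((p : ℤ)) ^ (m.factorization p) ∣ (m : ℤ) := by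
          exact_mod_cast Int.natCast_dvd_natCast.mpr (Nat.ordProj_dvd m p)
        have := Int.dvd_gcd h2 hblk
        rw [← hd] at this
        exact_mod_cast this
      have := (Nat.Prime.pow_dvd_iff_le_factorization hp hd0).mp hpe
      omega
  · left
    exact Nat.factorization_eq_zero_of_not_dvd hpd

/-- Recovering `g` from `g * d`. -/
lemma g_eq {g g' m m' d d' t : ℕ} (hg : g ≠ 0) (hg' : g' ≠ 0) (hm : m ≠ 0) (hm' : m' ≠ 0)
    (hd0 : d ≠ 0) (hd0' : d' ≠ 0)
    (ht : t = g ^ 2 * m) (ht' : t = g' ^ 2 * m') (hd : d ∣ m) (hd' : d' ∣ m')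
    (hb : ∀ p : ℕ, p.Prime → d.factorization p = 0 ∨ d.factorization p = m.factorization p)
    (hb' : ∀ p : ℕ, p.Prime → d'.factorization p = 0 ∨ d'.factorization p = m'.factorization p)
    (h : g * d = g' * d') : g = g' := by
  apply Nat.eq_of_factorization_eq hg hg'
  intro p
  by_cases hp : p.Prime
  · have e1 : (g * d).factorization p = (g' * d').factorization p := by rw [h]
    rw [Nat.factorization_mul hg hd0, Nat.factorization_mul hg' hd0'] at e1
    simp only [Finsupp.add_apply] at e1
    have e2 : (g ^ 2 * m).factorization p = (g' ^ 2 * m').factorization p := by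
      rw [← ht, ← ht']
    rw [Nat.factorization_mul (pow_ne_zero 2 hg) hm,
        Nat.factorization_mul (pow_ne_zero 2 hg') hm',
        Nat.factorization_pow, Nat.factorization_pow] at e2
    simp only [Finsupp.add_apply, Finsupp.smul_apply, smul_eq_mul] at e2
    have hdm : d.factorization p ≤ m.factorization p :=
      (Nat.factorization_le_iff_dvd hd0 hm).mpr hd p
    have hdm' : d'.factorization p ≤ m'.factorization p :=
      (Nat.factorization_le_iff_dvd hd0' hm').mpr hd' p
    rcases hb p hp with h1 | h1 <;> rcases hb' p hp with h2 | h2 <;> omega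
  · rw [Nat.factorization_eq_zero_of_not_prime _ hp,
        Nat.factorization_eq_zero_of_not_prime _ hp]

end Stmt7Aux

namespace Stmt7Aux

lemma not_dvd_of_coprime {m p : ℕ} {x : ℤ} (hpZ : Prime (p : ℤ)) (hpm : p ∣ m)
    (hc : IsCoprime x (m : ℤ)) : ¬ (p : ℤ) ∣ x := by
  intro hx
  obtain ⟨u, v, huv⟩ := hc
  have hpmZ : (p : ℤ) ∣ (m : ℤ) := Int.natCast_dvd_natCast.mpr hpm
  have : (p : ℤ) ∣ 1 := by
    rw [← huv]
    exact dvd_add (Dvd.dvd.mul_left hx u) (Dvd.dvd.mul_left hpmZ v)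
  exact hpZ.not_dvd_one this

/-- If two primitive elements of norm `m` have the same `d`-invariant, then `m` divides
`K = a b' - b a'`. -/
lemma dvd_K {m : ℕ} {a b a' b' a₀ b₀ : ℤ} (hm : Prim m a b) (hm' : Prim m a' b')
    (h0 : Prim m a₀ b₀)
    (h : Int.gcd (m : ℤ) (a * b₀ - b * a₀) = Int.gcd (m : ℤ) (a' * b₀ - b' * a₀)) :
    (m : ℤ) ∣ a * b' - b * a' := by
  set K : ℤ := a * b' - b * a' with hK
  have hm0 : m ≠ 0 := hm.m_ne_zero
  by_cases hK0 : K = 0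
  · rw [hK0]; exact dvd_zero _
  have hKnat0 : K.natAbs ≠ 0 := fun hh => hK0 (Int.natAbs_eq_zero.mp hh)
  have main : m ∣ K.natAbs := by
    refine (Nat.factorization_le_iff_dvd hm0 hKnat0).mp ?_
    intro p
    by_cases hp : p.Prime
    swap
    · rw [Nat.factorization_eq_zero_of_not_prime _ hp]; exact Nat.zero_le _
    set e : ℕ := m.factorization p with he
    rcases Nat.eq_zero_or_pos e with he0 | hepos
    · omega
    have hpm : p ∣ m := Nat.dvd_of_factorization_pos (by omega)
    have hpZ : Prime (p : ℤ) := Int.prime_iff_natAbs_prime.mpr (by simpa using hp)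
    -- reduce to `(p : ℤ) ^ e ∣ K`
    suffices hsf : (p : ℤ) ^ e ∣ K by
      have : p ^ e ∣ K.natAbs := by
        rw [← Int.natAbs_natCast (p ^ e), Int.natAbs_dvd_natAbs]
        push_cast
        exact hsf
      exact (Nat.Prime.pow_dvd_iff_le_factorization hp hKnat0).mp this
    by_cases hp2 : p = 2
    · subst hp2
      have he1 : e ≤ 1 := hm.two_le_one
      have he' : e = 1 := by omega
      rw [he']
      have h2m : 2 ∣ m := hpm
      obtain ⟨ha, hb⟩ := hm.odd_of_even h2m
      obtain ⟨ha', hb'⟩ := hm'.odd_of_even h2m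
      have : Even K := by
        rw [hK]
        exact (ha.mul hb').sub_odd (hb.mul ha')
      obtain ⟨c, hc⟩ := this
      exact ⟨c, by push_cast; omega⟩
    · have hna₀ : ¬ (p : ℤ) ∣ a₀ := not_dvd_of_coprime hpZ hpm h0.coprime_left
      have hcop : IsCoprime ((p : ℤ) ^ e) a₀ :=
        (hpZ.coprime_iff_not_dvd.mpr hna₀).pow_left
      by_cases hpM : (p : ℤ) ∣ a * b₀ - b * a₀
      · -- then p divides both gcds, so both blocks
        have hpd : (p : ℤ) ∣ (Int.gcd (m : ℤ) (a * b₀ - b * a₀) : ℤ) :=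
          Int.dvd_coe_gcd (Int.natCast_dvd_natCast.mpr hpm) hpM
        have hpM' : (p : ℤ) ∣ a' * b₀ - b' * a₀ := by
          rw [h] at hpd
          exact hpd.trans (Int.gcd_dvd_right _ _)
        have B := block hm h0 hp hp2 hpm hpM
        have B' := block hm' h0 hp hp2 hpm hpM'
        have hid : a' * (a * b₀ - b * a₀) - a * (a' * b₀ - b' * a₀) = a₀ * K := by
          rw [hK]; ring
        have : (p : ℤ) ^ e ∣ a₀ * K := by
          rw [← hid]
          exact dvd_sub (B.mul_left a') (B'.mul_left a)
        exact hcop.dvd_of_dvd_mul_left this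
      · have hpM' : ¬ (p : ℤ) ∣ a' * b₀ - b' * a₀ := by
          intro hc'
          apply hpM
          have hpd : (p : ℤ) ∣ (Int.gcd (m : ℤ) (a' * b₀ - b' * a₀) : ℤ) :=
            Int.dvd_coe_gcd (Int.natCast_dvd_natCast.mpr hpm) hc'
          rw [← h] at hpd
          exact hpd.trans (Int.gcd_dvd_right _ _)
        have B := block' hm h0 hp hpm hpM
        have B' := block' hm' h0 hp hpm hpM'
        have hid : a' * (a * b₀ + b * a₀) - a * (a' * b₀ + b' * a₀) = -(a₀ * K) := by
          rw [hK]; ring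
        have hneg : (p : ℤ) ^ e ∣ -(a₀ * K) := by
          rw [← hid]
          exact dvd_sub (B.mul_left a') (B'.mul_left a)
        have : (p : ℤ) ^ e ∣ a₀ * K := dvd_neg.mp hneg
        exact hcop.dvd_of_dvd_mul_left this
  rw [← Int.natAbs_dvd_natAbs, Int.natAbs_natCast]
  exact main.trans (dvd_refl _)

lemma dvd_L {m : ℕ} {a b a' b' : ℤ} (hm : Prim m a b)
    (hK : (m : ℤ) ∣ a * b' - b * a') : (m : ℤ) ∣ a * a' + b * b' := by
  have hid : a * (a * a' + b * b') - b * (a * b' - b * a') = a' * (m : ℤ) := by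
    linear_combination a' * hm.1
  have h1 : (m : ℤ) ∣ a * (a * a' + b * b') := by
    have : a * (a * a' + b * b') = a' * (m : ℤ) + b * (a * b' - b * a') := by
      linear_combination hid
    rw [this]
    exact dvd_add ⟨a', mul_comm _ _⟩ (hK.mul_left b)
  exact (hm.coprime_left.symm).dvd_of_dvd_mul_left h1

end Stmt7Aux

namespace Stmt7Aux

open Zsqrtd

lemma assoc_of_dvd {m : ℕ} {β β' : GaussianInt} (hm0 : m ≠ 0)
    (hnm : β.norm = (m : ℤ)) (hnm' : β'.norm = (m : ℤ))
    (hL : (m : ℤ) ∣ β.re * β'.re + β.im * β'.im)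
    (hK : (m : ℤ) ∣ β.re * β'.im - β.im * β'.re) :
    Associated β β' := by
  obtain ⟨k, hk⟩ := hL
  obtain ⟨l, hl⟩ := hK
  set γ : GaussianInt := ⟨k, l⟩ with hγ
  have claim : star β * β' = (m : GaussianInt) * γ := by
    ext
    · rw [Zsqrtd.re_mul, Zsqrtd.re_mul, Zsqrtd.re_star, Zsqrtd.im_star,
        Zsqrtd.re_natCast, Zsqrtd.im_natCast]
      show β.re * β'.re + (-1) * (-β.im) * β'.im = (m : ℤ) * k + (-1) * 0 * l
      rw [← hk]; ring
    · rw [Zsqrtd.im_mul, Zsqrtd.im_mul, Zsqrtd.re_star, Zsqrtd.im_star,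
        Zsqrtd.re_natCast, Zsqrtd.im_natCast]
      show β.re * β'.im + (-β.im) * β'.re = (m : ℤ) * l + 0 * k
      rw [← hl]; ring
  have hmZ : (m : ℤ) ≠ 0 := by exact_mod_cast hm0
  have hnγ : γ.norm = 1 := by
    have h1 : (star β * β').norm = (m : ℤ) * (m : ℤ) := by
      rw [Zsqrtd.norm_mul, Zsqrtd.norm_conj, hnm, hnm']
    have h2 : ((m : GaussianInt) * γ).norm = (m : ℤ) * (m : ℤ) * γ.norm := by
      rw [Zsqrtd.norm_mul, Zsqrtd.norm_natCast]
    rw [claim, h2] at h1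
    exact mul_left_cancel₀ (mul_ne_zero hmZ hmZ) (h1.trans (mul_one ((m:ℤ)*(m:ℤ))).symm)
  have hU : IsUnit γ := (Zsqrtd.norm_eq_one_iff' (by norm_num) γ).mp hnγ
  have hβs : star β ≠ 0 := by
    intro h
    have : β.norm = 0 := by
      rw [← Zsqrtd.norm_conj, h, Zsqrtd.norm_zero]
    rw [hnm] at this
    exact hmZ this
  have hmul : (m : GaussianInt) = β * star β := by
    have h1 : ((β.norm : ℤ) : GaussianInt) = β * star β := Zsqrtd.norm_eq_mul_conj β
    rw [hnm] at h1
    exact_mod_cast h1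
  have hfin : β' = β * γ := by
    apply mul_left_cancel₀ hβs
    rw [claim, hmul]
    ring
  exact ⟨hU.unit, by rw [IsUnit.unit_spec]; exact hfin.symm⟩

/-- the divisor invariant of a primitive pair -/
noncomputable def dPart (m : ℕ) (a b : ℤ) : ℕ :=
  Int.gcd (m : ℤ) (a * (refP m).2 - b * (refP m).1)

noncomputable def psi (t : ℕ) (α : GaussianInt) : ℕ :=
  Int.gcd α.re α.im *
    dPart (t / (Int.gcd α.re α.im) ^ 2)
      (α.re / (Int.gcd α.re α.im : ℤ)) (α.im / (Int.gcd α.re α.im : ℤ))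

lemma decomp {t : ℕ} (ht : 0 < t) {α : GaussianInt} (hα : α.norm = t) :
    ∃ g m : ℕ, g ≠ 0 ∧ m ≠ 0 ∧ t = g ^ 2 * m ∧ g = Int.gcd α.re α.im ∧ m = t / g ^ 2 ∧
      α.re = (g : ℤ) * (α.re / (g : ℤ)) ∧ α.im = (g : ℤ) * (α.im / (g : ℤ)) ∧
      Prim m (α.re / (g : ℤ)) (α.im / (g : ℤ)) := by
  set g : ℕ := Int.gcd α.re α.im with hgdef
  have hnorm : (t : ℤ) = α.re * α.re + α.im * α.im := by
    rw [← hα, Zsqrtd.norm_def]; ring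
  have hg0 : g ≠ 0 := by
    intro h
    obtain ⟨h1, h2⟩ := Int.gcd_eq_zero_iff.mp h
    rw [h1, h2] at hnorm
    simp at hnorm
    omega
  have hgpos : 0 < g := Nat.pos_of_ne_zero hg0
  have hre : (g : ℤ) ∣ α.re := Int.gcd_dvd_left _ _
  have him : (g : ℤ) ∣ α.im := Int.gcd_dvd_right _ _
  set a : ℤ := α.re / (g : ℤ) with ha
  set b : ℤ := α.im / (g : ℤ) with hb
  have hre' : α.re = (g : ℤ) * a := (Int.mul_ediv_cancel' hre).symm
  have him' : α.im = (g : ℤ) * b := (Int.mul_ediv_cancel' him).symm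
  have hab : Int.gcd a b = 1 := Int.gcd_div_gcd_div_gcd hgpos
  have hsum : (t : ℤ) = (g : ℤ) ^ 2 * (a ^ 2 + b ^ 2) := by
    rw [hnorm, hre', him']; ring
  have hdvd : g ^ 2 ∣ t := by
    have h1 : ((g : ℕ) ^ 2 : ℤ) ∣ (t : ℤ) := ⟨a ^ 2 + b ^ 2, by push_cast; linarith [hsum]⟩
    exact_mod_cast h1
  set m : ℕ := t / g ^ 2 with hmdef
  have htm : t = g ^ 2 * m := (Nat.mul_div_cancel' hdvd).symm
  have hm0 : m ≠ 0 := by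
    intro h
    rw [h, mul_zero] at htm
    omega
  have hprim1 : a ^ 2 + b ^ 2 = (m : ℤ) := by
    have h2 : ((g : ℤ) ^ 2) * (a ^ 2 + b ^ 2) = ((g : ℤ) ^ 2) * (m : ℤ) := by
      rw [← hsum]
      push_cast [htm]
      ring
    have hg2 : ((g : ℤ) ^ 2) ≠ 0 := by positivity
    exact mul_left_cancel₀ hg2 h2
  exact ⟨g, m, hg0, hm0, htm, rfl, rfl, hre', him', ⟨hprim1, hab⟩⟩

lemma psi_eq {t : ℕ} {α : GaussianInt} {g m : ℕ}
    (hg : g = Int.gcd α.re α.im) (hm : m = t / g ^ 2) :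
    psi t α = g * dPart m (α.re / (g : ℤ)) (α.im / (g : ℤ)) := by
  rw [psi, ← hg, ← hm]

lemma dPart_dvd {m : ℕ} (a b : ℤ) : dPart m a b ∣ m := by
  have : ((dPart m a b : ℕ) : ℤ) ∣ (m : ℤ) := Int.gcd_dvd_left _ _
  exact_mod_cast this

lemma dPart_ne_zero {m : ℕ} (hm : m ≠ 0) (a b : ℤ) : dPart m a b ≠ 0 := by
  intro h
  rw [dPart] at h
  obtain ⟨h1, _⟩ := Int.gcd_eq_zero_iff.mp h
  exact hm (by exact_mod_cast h1)

lemma psi_mem {t : ℕ} (ht : 0 < t) {α : GaussianInt} (hα : α.norm = t) :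
    psi t α ∈ t.divisors := by
  obtain ⟨g, m, hg0, hm0, htm, hg, hm, _, _, hprim⟩ := decomp ht hα
  rw [psi_eq hg hm]
  rw [Nat.mem_divisors]
  constructor
  · have h1 : g * dPart m (α.re / (g : ℤ)) (α.im / (g : ℤ)) ∣ g * m :=
      mul_dvd_mul_left g (dPart_dvd _ _)
    have h2 : g * m ∣ g ^ 2 * m := by
      apply mul_dvd_mul_right
      exact dvd_pow_self g (by norm_num)
    rw [htm]
    exact h1.trans h2
  · omega

lemma psi_inj {t : ℕ} (ht : 0 < t) {α α' : GaussianInt}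
    (hα : α.norm = t) (hα' : α'.norm = t) (h : psi t α = psi t α') :
    Associated α α' := by
  obtain ⟨g, m, hg0, hm0, htm, hg, hm, hre, him, hprim⟩ := decomp ht hα
  obtain ⟨g', m', hg0', hm0', htm', hg', hm', hre', him', hprim'⟩ := decomp ht hα'
  set a : ℤ := α.re / (g : ℤ)
  set b : ℤ := α.im / (g : ℤ)
  set a' : ℤ := α'.re / (g' : ℤ)
  set b' : ℤ := α'.im / (g' : ℤ)
  rw [psi_eq hg hm, psi_eq hg' hm'] at h
  -- reference primitive elements
  have hex : ∃ p : ℤ × ℤ, Prim m p.1 p.2 := ⟨(a, b), hprim⟩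
  have hex' : ∃ p : ℤ × ℤ, Prim m' p.1 p.2 := ⟨(a', b'), hprim'⟩
  have h0 := refP_spec hex
  have h0' := refP_spec hex'
  -- g = g'
  have hgg : g = g' := by
    refine g_eq hg0 hg0' hm0 hm0' (dPart_ne_zero hm0 a b) (dPart_ne_zero hm0' a' b')
      htm htm' (dPart_dvd a b) (dPart_dvd a' b')
      (fun p hp => block_nat hprim h0 p hp) (fun p hp => block_nat hprim' h0' p hp) h
  subst hgg
  have hmm : m = m' := by
    have := htm.symm.trans htm'
    have hgsq : 0 < g ^ 2 := by positivity
    exact Nat.eq_of_mul_eq_mul_left hgsq this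
  subst hmm
  have hdd : dPart m a b = dPart m a' b' :=
    Nat.eq_of_mul_eq_mul_left (Nat.pos_of_ne_zero hg0) h
  -- associated at the primitive level
  set β : GaussianInt := ⟨a, b⟩ with hβ
  set β' : GaussianInt := ⟨a', b'⟩ with hβ'
  have hnβ : β.norm = (m : ℤ) := by
    rw [Zsqrtd.norm_def]
    show a * a - (-1) * b * b = (m : ℤ)
    linear_combination hprim.1
  have hnβ' : β'.norm = (m : ℤ) := by
    rw [Zsqrtd.norm_def]
    show a' * a' - (-1) * b' * b' = (m : ℤ)
    linear_combination hprim'.1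
  have hK : (m : ℤ) ∣ a * b' - b * a' := by
    apply dvd_K hprim hprim' h0
    exact_mod_cast congrArg (fun n : ℕ => n) hdd
  have hL : (m : ℤ) ∣ a * a' + b * b' := dvd_L hprim hK
  have hassoc : Associated β β' := assoc_of_dvd hm0 hnβ hnβ' hL hK
  -- lift to α
  have hαg : α = (g : GaussianInt) * β := by
    ext
    · rw [Zsqrtd.re_mul, Zsqrtd.re_natCast, Zsqrtd.im_natCast]
      show α.re = (g : ℤ) * a + (-1) * 0 * b
      rw [hre]; ring
    · rw [Zsqrtd.im_mul, Zsqrtd.re_natCast, Zsqrtd.im_natCast]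
      show α.im = (g : ℤ) * b + 0 * a
      rw [him]; ring
  have hαg' : α' = (g : GaussianInt) * β' := by
    ext
    · rw [Zsqrtd.re_mul, Zsqrtd.re_natCast, Zsqrtd.im_natCast]
      show α'.re = (g : ℤ) * a' + (-1) * 0 * b'
      rw [hre']; ring
    · rw [Zsqrtd.im_mul, Zsqrtd.re_natCast, Zsqrtd.im_natCast]
      show α'.im = (g : ℤ) * b' + 0 * a'
      rw [him']; ring
  rw [hαg, hαg']
  exact hassoc.mul_left _

end Stmt7Aux

theorem stmt7 (t : ℕ) (ht : 0 < t) :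
    ∃ S : Finset GaussianInt, S.card ≤ t.divisors.card ∧
      ∀ α : GaussianInt, Zsqrtd.norm α = t → ∃ β ∈ S, Associated α β := by
  classical
  refine ⟨t.divisors.image (fun n =>
    if h : ∃ α : GaussianInt, α.norm = t ∧ Stmt7Aux.psi t α = n then h.choose else 0),
    Finset.card_image_le, ?_⟩
  intro α hα
  have hmem : Stmt7Aux.psi t α ∈ t.divisors := Stmt7Aux.psi_mem ht hα
  have hex : ∃ α' : GaussianInt, α'.norm = t ∧ Stmt7Aux.psi t α' = Stmt7Aux.psi t α :=
    ⟨α, hα, rfl⟩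
  refine ⟨_, Finset.mem_image_of_mem _ hmem, ?_⟩
  rw [dif_pos hex]
  exact (Stmt7Aux.psi_inj ht hex.choose_spec.1 hα hex.choose_spec.2).symm
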